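/- Let Φ⁻¹ be holomorphic on {|z| > r₀} with expansion Φ⁻¹(z) = z + Σ_{n≥1} b_n z^{-n} absolutely convergent for |z| > r₀, and suppose (Φ⁻¹)'(z) = Σ_{n≥0} c_n z^{-n} with Σ|c_n| r₀^{-n} < ∞. If w(t,·) ∈ L¹(B_{r₀}) depends continuously differentiably on t and for every m ≥ 1 the moments ∫_{B_{r₀}} conj((Φ⁻¹)'(z)) w(t,x)/z^m dx are constant in t, then for every k ≥ 1 the weighted moment ∫_{B_{r₀}} |(Φ⁻¹)'(z)|² w(t,x)/z^k dx is also constant in t. -/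

import Mathlib

open MeasureTheory Set

theorem weighted_moment_invariance_riemann_mapping
    (r₀ : ℝ) (hr₀ : 0 < r₀)
    (c : ℕ → ℂ) (g : ℂ → ℂ)
    (hc : Summable (fun n : ℕ => ‖c n‖ / r₀ ^ n))
    (hg : ∀ z : ℂ, r₀ < ‖z‖ → g z = ∑' n : ℕ, c n / z ^ n)
    (w : ℝ → ℂ → ℂ)
    (hwt : ∀ z : ℂ, ContDiff ℝ 1 (fun t : ℝ => w t z))
    (hwint : ∀ t : ℝ, IntegrableOn (w t) {z : ℂ | r₀ < ‖z‖})
    (hmomint : ∀ (t : ℝ) (m : ℕ), 1 ≤ m →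
      IntegrableOn (fun z : ℂ => (starRingEnd ℂ) (g z) * w t z / z ^ m)
        {z : ℂ | r₀ < ‖z‖})
    (hwgint : ∀ (t : ℝ) (k : ℕ), 1 ≤ k →
      IntegrableOn (fun z : ℂ => g z * (starRingEnd ℂ) (g z) * w t z / z ^ k)
        {z : ℂ | r₀ < ‖z‖})
    (hconst : ∀ (m : ℕ), 1 ≤ m → ∀ t s : ℝ,
      ∫ z in {z : ℂ | r₀ < ‖z‖}, (starRingEnd ℂ) (g z) * w t z / z ^ m
        = ∫ z in {z : ℂ | r₀ < ‖z‖}, (starRingEnd ℂ) (g z) * w s z / z ^ m) :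
    ∀ (k : ℕ), 1 ≤ k → ∀ t s : ℝ,
      ∫ z in {z : ℂ | r₀ < ‖z‖}, g z * (starRingEnd ℂ) (g z) * w t z / z ^ k
        = ∫ z in {z : ℂ | r₀ < ‖z‖}, g z * (starRingEnd ℂ) (g z) * w s z / z ^ k := by
  intro k hk t s
  set S : Set ℂ := {z : ℂ | r₀ < ‖z‖} with hS
  have hSmeas : MeasurableSet S := by
    have : IsOpen S := isOpen_lt continuous_const continuous_norm
    exact this.measurableSet
  -- key expansion of the integral for any time τ
  have key : ∀ τ : ℝ,
      (∫ z in S, g z * (starRingEnd ℂ) (g z) * w τ z / z ^ k)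
        = ∑' n : ℕ, c n * ∫ z in S, (starRingEnd ℂ) (g z) * w τ z / z ^ (n + k) := by
    intro τ
    -- term functions
    set F : ℕ → ℂ → ℂ := fun n z => c n * ((starRingEnd ℂ) (g z) * w τ z / z ^ (n + k))
      with hF
    have hFint : ∀ n, Integrable (F n) (volume.restrict S) := by
      intro n
      exact (hmomint τ (n + k) (by omega)).const_mul (c n)
    -- pointwise norm bound
    have hbound : ∀ n, ∀ z ∈ S,
        ‖F n z‖ ≤ ‖c n‖ / r₀ ^ n * ‖(starRingEnd ℂ) (g z) * w τ z / z ^ k‖ := by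
      intro n z hz
      have hz' : r₀ < ‖z‖ := hz
      have hzr : r₀ ^ n ≤ ‖z‖ ^ n := by
        exact pow_le_pow_left₀ hr₀.le hz'.le n
      have hab : (0:ℝ) < ‖z‖ := lt_trans hr₀ hz'
      set A := (starRingEnd ℂ) (g z) * w τ z with hA
      have h1 : ‖F n z‖ = ‖c n‖ * (‖A‖ / ‖z‖ ^ (n + k)) := by
        rw [show F n z = c n * (A / z ^ (n + k)) from rfl, norm_mul, norm_div, norm_pow]
      have h2 : ‖(starRingEnd ℂ) (g z) * w τ z / z ^ k‖ = ‖A‖ / ‖z‖ ^ k := by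
        rw [show (starRingEnd ℂ) (g z) * w τ z / z ^ k = A / z ^ k from rfl, norm_div, norm_pow]
      rw [h1, h2]
      rw [pow_add]
      have heq : ‖c n‖ * (‖A‖ / (‖z‖ ^ n * ‖z‖ ^ k))
          = ‖c n‖ / ‖z‖ ^ n * (‖A‖ / ‖z‖ ^ k) := by
        rw [div_mul_div_comm, mul_div_assoc]
      rw [heq]
      gcongr <;> first
        | exact norm_nonneg _
        | exact hzr
        | exact pow_pos hr₀ n
        | exact div_nonneg (norm_nonneg _) (pow_nonneg hab.le k)
    -- summability of the integrals of norms
    have hGint : Integrable (fun z => (starRingEnd ℂ) (g z) * w τ z / z ^ k)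
        (volume.restrict S) := hmomint τ k hk
    have hsum : Summable fun n => ∫ z in S, ‖F n z‖ := by
      apply Summable.of_nonneg_of_le
        (fun n => integral_nonneg fun z => norm_nonneg _)
        (fun n => ?_) (hc.mul_right (∫ z in S, ‖(starRingEnd ℂ) (g z) * w τ z / z ^ k‖))
      calc ∫ z in S, ‖F n z‖
          ≤ ∫ z in S, ‖c n‖ / r₀ ^ n * ‖(starRingEnd ℂ) (g z) * w τ z / z ^ k‖ := by
            apply setIntegral_mono_on (hFint n).norm (hGint.norm.const_mul _) hSmeas
            exact hbound n
        _ = ‖c n‖ / r₀ ^ n * ∫ z in S, ‖(starRingEnd ℂ) (g z) * w τ z / z ^ k‖ :=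
            integral_const_mul _ _
    -- pointwise expansion
    have hpt : EqOn (fun z : ℂ => g z * (starRingEnd ℂ) (g z) * w τ z / z ^ k)
        (fun z : ℂ => ∑' n : ℕ, F n z) S := by
      intro z hz
      have hz' : r₀ < ‖z‖ := hz
      simp only [hF]
      have step : ∀ n : ℕ, c n * ((starRingEnd ℂ) (g z) * w τ z / z ^ (n + k))
          = (c n / z ^ n) * ((starRingEnd ℂ) (g z) * w τ z / z ^ k) := by
        intro n
        rw [pow_add, div_mul_div_comm]
        ring
      calc g z * (starRingEnd ℂ) (g z) * w τ z / z ^ k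
          = (∑' n : ℕ, c n / z ^ n) * ((starRingEnd ℂ) (g z) * w τ z / z ^ k) := by
            rw [← hg z hz']; ring
        _ = ∑' n : ℕ, (c n / z ^ n) * ((starRingEnd ℂ) (g z) * w τ z / z ^ k) := by
            rw [tsum_mul_right]
        _ = ∑' n : ℕ, c n * ((starRingEnd ℂ) (g z) * w τ z / z ^ (n + k)) := by
            exact tsum_congr fun n => (step n).symm
    rw [setIntegral_congr_fun hSmeas hpt]
    rw [← MeasureTheory.integral_tsum_of_summable_integral_norm hFint hsum]
    refine tsum_congr fun n => ?_
    exact integral_const_mul _ _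
  rw [key t, key s]
  refine tsum_congr fun n => ?_
  rw [hconst (n + k) (by omega) t s]
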